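/- Let β > 0, B a real d × M matrix, g, g̃, f₀ ∈ ℝ^d, and a, ℓ₀ ∈ ℝ. Set u = −(1/β)·Bᵀg̃ and u_V = −(1/β)·Bᵀg. Suppose (i) the HJB identity a + ℓ₀ + ⟨g, f₀ + B·u_V⟩ + (β/2)·|u_V|² = 0 holds, (ii) K ≥ |f₀ + B·u_V|, and (iii) |g − g̃| ≤ ε with ε ≤ 1. Then (β/2)·|u|² + ℓ₀ + ⟨f₀ + B·u, g⟩ ≤ −a + (2K + ‖B‖²/β)·ε, where ‖B‖ is the operator norm of B. -/

import Mathlib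

open scoped RealInnerProductSpace

private lemma aux_heq (β b ε : ℝ) (hβ : β ≠ 0) :
    β / 2 * ((1 / β) * (b * ε)) ^ 2 = b ^ 2 / β * ε ^ 2 / 2 := by
  field_simp

set_option maxHeartbeats 1000000 in
/-- Central pointwise estimate in the proof of the convergence
theorem: if the HJB identity holds at `(a, g)` and `|g - g̃| ≤ ε ≤ 1`, then
`(β/2)|u|² + ℓ₀ + ⟨f₀ + Bu, g⟩ ≤ -a + (2K + ‖B‖²/β)ε`. -/
theorem convergence_central_estimate
    (d M : ℕ) (β : ℝ) (hβ : 0 < β)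
    (B : EuclideanSpace ℝ (Fin M) →L[ℝ] EuclideanSpace ℝ (Fin d))
    (g gtilde f₀ : EuclideanSpace ℝ (Fin d)) (a ℓ₀ K ε : ℝ)
    (u uV : EuclideanSpace ℝ (Fin M))
    (hu : u = -(1 / β) • (ContinuousLinearMap.adjoint B) gtilde)
    (huV : uV = -(1 / β) • (ContinuousLinearMap.adjoint B) g)
    (hHJB : a + ℓ₀ + ⟪g, f₀ + B uV⟫ + β / 2 * ‖uV‖ ^ 2 = 0)
    (hK : ‖f₀ + B uV‖ ≤ K)
    (hgg : ‖g - gtilde‖ ≤ ε) (hε : ε ≤ 1) :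
    β / 2 * ‖u‖ ^ 2 + ℓ₀ + ⟪f₀ + B u, g⟫
      ≤ -a + (2 * K + ‖B‖ ^ 2 / β) * ε := by
  have hβ' : β ≠ 0 := ne_of_gt hβ
  have hε0 : 0 ≤ ε := le_trans (norm_nonneg _) hgg
  have hK0 : 0 ≤ K := le_trans (norm_nonneg _) hK
  set w : EuclideanSpace ℝ (Fin d) := g - gtilde with hw
  set v : EuclideanSpace ℝ (Fin M) := (1 / β) • (ContinuousLinearMap.adjoint B) w
    with hv
  have huv : u = uV + v := by
    rw [hu, huV, hv, hw, map_sub]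
    module
  have hBg : (ContinuousLinearMap.adjoint B) g = (-β) • uV := by
    rw [huV, smul_smul]
    rw [show (-β) * -(1 / β) = 1 by field_simp]
    rw [one_smul]
  -- inner product computations
  have hBv : ⟪B v, g⟫ = -β * ⟪v, uV⟫ := by
    rw [← ContinuousLinearMap.adjoint_inner_right, hBg, real_inner_smul_right]
  have hnorm : ‖u‖ ^ 2 = ‖uV‖ ^ 2 + 2 * ⟪uV, v⟫ + ‖v‖ ^ 2 := by
    rw [huv]
    rw [show ‖uV + v‖ ^ 2 = ‖uV‖ ^ 2 + 2 * ⟪uV, v⟫ + ‖v‖ ^ 2 from by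
      rw [← real_inner_self_eq_norm_sq, ← real_inner_self_eq_norm_sq,
        ← real_inner_self_eq_norm_sq, inner_add_add_self, real_inner_comm v uV]
      ring]
  have hinner : ⟪f₀ + B u, g⟫ = ⟪g, f₀ + B uV⟫ + (-β * ⟪v, uV⟫) := by
    rw [← hBv]
    simp only [huv, map_add, inner_add_left, inner_add_right, real_inner_comm g]
    ring
  have hcomm : ⟪v, uV⟫ = ⟪uV, v⟫ := real_inner_comm _ _
  have key : β / 2 * ‖u‖ ^ 2 + ℓ₀ + ⟪f₀ + B u, g⟫ = -a + β / 2 * ‖v‖ ^ 2 := by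
    rw [hinner, hnorm, hcomm]
    linarith [hHJB]
  rw [key]
  -- bound ‖v‖
  have hadj : ‖(ContinuousLinearMap.adjoint B) w‖ ≤ ‖B‖ * ε := by
    calc ‖(ContinuousLinearMap.adjoint B) w‖
        ≤ ‖ContinuousLinearMap.adjoint B‖ * ‖w‖ :=
          (ContinuousLinearMap.adjoint B).le_opNorm w
      _ ≤ ‖B‖ * ε := by
          rw [LinearIsometryEquiv.norm_map ContinuousLinearMap.adjoint B]
          exact mul_le_mul_of_nonneg_left hgg (norm_nonneg _)
  have hvnorm : ‖v‖ ≤ (1 / β) * (‖B‖ * ε) := by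
    rw [hv, norm_smul, Real.norm_eq_abs, abs_of_pos (by positivity)]
    exact mul_le_mul_of_nonneg_left hadj (by positivity)
  have hv0 : (0:ℝ) ≤ ‖v‖ := norm_nonneg _
  have hB0 : (0:ℝ) ≤ ‖B‖ := norm_nonneg _
  have hsq : ‖v‖ ^ 2 ≤ ((1 / β) * (‖B‖ * ε)) ^ 2 :=
    pow_le_pow_left₀ hv0 hvnorm 2
  have hεsq : ε ^ 2 ≤ ε := by nlinarith
  have hC0 : (0:ℝ) ≤ ‖B‖ ^ 2 / β := by positivity
  have h1 : β / 2 * ‖v‖ ^ 2 ≤ ‖B‖ ^ 2 / β * ε ^ 2 / 2 := by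
    rw [← aux_heq β ‖B‖ ε hβ']; exact mul_le_mul_of_nonneg_left hsq (by positivity)
  have h2 : ‖B‖ ^ 2 / β * ε ^ 2 ≤ ‖B‖ ^ 2 / β * ε :=
    mul_le_mul_of_nonneg_left hεsq hC0
  have h3 : (0:ℝ) ≤ ‖B‖ ^ 2 / β * ε := mul_nonneg hC0 hε0
  have h4 : (0:ℝ) ≤ K * ε := mul_nonneg hK0 hε0
  have hexpand : (2 * K + ‖B‖ ^ 2 / β) * ε = 2 * (K * ε) + ‖B‖ ^ 2 / β * ε := by
    ring
  linarith
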